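/- Let (V, ω) be a real symplectic vector space (a finite-dimensional real vector space with a nondegenerate alternating bilinear form). Then the symplectic Lie algebra sp(V) = {A ∈ End(V) : ω(Ax, y) + ω(x, Ay) = 0 for all x, y ∈ V} is equal to the linear span of the endomorphisms S_a : x ↦ ω(x, a)·a, where a ranges over V. -/

import Mathlib

variable {V : Type} [AddCommGroup V] [Module ℝ V]

/-- The rank-one "square" endomorphism `S_a : x ↦ ω(x, a)·a` associated to `a ∈ V`. -/
def sqEndo (ω : V →ₗ[ℝ] V →ₗ[ℝ] ℝ) (a : V) : V →ₗ[ℝ] V where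
  toFun x := ω x a • a
  map_add' x y := by simp [map_add, add_smul]
  map_smul' c x := by simp [map_smul, mul_smul]

/-- The symplectic Lie algebra `sp(V)` of a symplectic form `ω`, as a submodule of `End(V)`:
the endomorphisms `A` with `ω(Ax, y) + ω(x, Ay) = 0` for all `x, y`. -/
def spLieAlgebra (ω : V →ₗ[ℝ] V →ₗ[ℝ] ℝ) : Submodule ℝ (V →ₗ[ℝ] V) where
  carrier := {A | ∀ x y, ω (A x) y + ω x (A y) = 0}
  zero_mem' := by intro x y; simp
  add_mem' := by
    intro A B hA hB x y
    have h1 := hA x y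
    have h2 := hB x y
    simp only [LinearMap.add_apply, map_add, LinearMap.add_apply] at *
    linarith
  smul_mem' := by
    intro c A hA x y
    have h := hA x y
    simp only [LinearMap.smul_apply, map_smul, LinearMap.smul_apply, smul_eq_mul] at *
    linear_combination c * h

/-- For a real symplectic vector space `(V, ω)`, the symplectic Lie algebra `sp(V)` equals
the linear span of the endomorphisms `S_a : x ↦ ω(x, a)·a`, `a ∈ V`. -/
theorem spLieAlgebra_eq_span_squares [FiniteDimensional ℝ V]
    (ω : V →ₗ[ℝ] V →ₗ[ℝ] ℝ)
    (halt : ∀ x, ω x x = 0)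
    (hnondeg : ∀ x, (∀ y, ω x y = 0) → x = 0) :
    spLieAlgebra ω = Submodule.span ℝ (Set.range (sqEndo ω)) := by
  have skew : ∀ x y, ω x y = -ω y x := by
    intro x y
    have := halt (x + y)
    simp [map_add, halt] at this
    linarith
  apply le_antisymm
  · -- hard direction: sp ⊆ span
    intro A hA
    have hA' : ∀ x y, ω (A x) y + ω x (A y) = 0 := hA
    -- the bilinear form B x y = ω (A x) y is symmetric
    set B : LinearMap.BilinForm ℝ V := ω.comp A with hB
    have hBapp : ∀ x y, B x y = ω (A x) y := fun x y => rfl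
    have hBsymm : B.IsSymm := by
      constructor
      intro x y
      simp only [RingHom.id_apply, hBapp]
      have h1 := hA' y x
      have h2 := skew y (A x)
      linarith
    obtain ⟨v, hv⟩ := LinearMap.BilinForm.exists_orthogonal_basis (LinearMap.BilinForm.isSymm_iff.1 hBsymm)
    -- surjectivity of a ↦ ω (·) a
    have hinj : Function.Injective ω.flip := by
      rw [← LinearMap.ker_eq_bot, LinearMap.ker_eq_bot']
      intro a ha
      apply hnondeg
      intro y
      rw [skew]
      have := congrFun (congrArg DFunLike.coe ha) y
      simpa using this
    have hsurj : Function.Surjective ω.flip := by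
      rw [← LinearMap.injective_iff_surjective_of_finrank_eq_finrank
        (Subspace.dual_finrank_eq (K := ℝ) (V := V)).symm]
      exact hinj
    choose a ha using fun i => hsurj (v.coord i)
    -- key: A equals the sum
    have key : A = ∑ i, (-(B (v i) (v i))) • sqEndo ω (a i) := by
      ext x
      have hcoord : ∀ i y, ω y (a i) = v.coord i y := by
        intro i y
        have := congrFun (congrArg DFunLike.coe (ha i)) y
        simpa using this
      apply eq_of_sub_eq_zero
      apply hnondeg
      intro y
      rw [map_sub, LinearMap.sub_apply]
      -- compute ω (Σ ... x) y
      have hsum : ω ((∑ i, (-(B (v i) (v i))) • sqEndo ω (a i)) x) y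
          = ∑ i, (B (v i) (v i)) * (v.coord i x * v.coord i y) := by
        rw [LinearMap.sum_apply, map_sum, LinearMap.sum_apply]
        apply Finset.sum_congr rfl
        intro i _
        have h1 : ω (a i) y = -(v.coord i y) := by
          rw [skew, hcoord]
        simp only [LinearMap.smul_apply, sqEndo, LinearMap.coe_mk, AddHom.coe_mk,
          map_smul, smul_eq_mul, LinearMap.map_smul₂, hcoord, h1]
        ring
      rw [hsum]
      -- compute ω (A x) y = B x y via expansion in the basis
      have hBsum : ∀ x y, B x y = ∑ i, (B (v i) (v i)) * (v.coord i x * v.coord i y) := by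
        intro x y
        conv_lhs => rw [← v.sum_repr x, ← v.sum_repr y]
        simp only [map_sum, map_smul, LinearMap.sum_apply, LinearMap.smul_apply, smul_eq_mul]
        apply Finset.sum_congr rfl
        intro i _
        rw [Finset.sum_eq_single i]
        · simp [Module.Basis.coord_apply]; ring
        · intro j _ hij
          rw [hv hij]
          ring
        · intro h; simp at h
      rw [← hBapp, hBsum x y, sub_self]
    rw [key]
    apply Submodule.sum_mem
    intro i _
    apply Submodule.smul_mem
    exact Submodule.subset_span (Set.mem_range_self _)
  · -- easy direction: span ⊆ sp
    rw [Submodule.span_le]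
    rintro _ ⟨b, rfl⟩
    intro x y
    simp only [sqEndo, LinearMap.coe_mk, AddHom.coe_mk, map_smul, LinearMap.map_smul₂,
      LinearMap.smul_apply, smul_eq_mul]
    linear_combination ω x b * skew b y
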